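/- Let 0 denote the empty specialization, with p_k(0) = 0 for all k ≥ 1, so that h_0(0) = 1 and h_k(0) = 0 for all k ≠ 0. Then for every partition λ, o_λ(0) = (−1)^{|λ|/2} if λ ∈ B (in which case |λ| is even), and o_λ(0) = 0 if λ ∉ B. -/

import Mathlib

open scoped BigOperators
open Filter
open Finset

/-- An integer partition: a weakly decreasing sequence of naturals, eventually zero.
`f i` is the `(i+1)`-st part `λ_{i+1}` (zero-indexed); parts beyond the length are `0`. -/
structure Partn where
  f : ℕ → ℕ
  antitone : ∀ ⦃i j : ℕ⦄, i ≤ j → f j ≤ f i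
  finsupp : ∃ N, ∀ i, N ≤ i → f i = 0

namespace Partn

/-- The length `ℓ(λ)`: the number of nonzero parts. -/
noncomputable def len (lam : Partn) : ℕ := sInf {N | lam.f N = 0}

/-- The size `|λ|`. -/
noncomputable def size (lam : Partn) : ℕ := ∑ i ∈ Finset.range lam.len, lam.f i

/-- The conjugate partition: `conj lam i = λ'_{i+1} = #{j : λ_j ≥ i+1}` (zero-indexed). -/
noncomputable def conj (lam : Partn) (i : ℕ) : ℕ :=
  ((Finset.range lam.len).filter fun j => i < lam.f j).card

/-- The Frobenius rank `d(λ) = #{i ≥ 1 : λ_i ≥ i}`. -/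
noncomputable def frobDiag (lam : Partn) : ℕ :=
  ((Finset.range lam.len).filter fun i => i < lam.f i).card

/-- Membership in the set `A`: Frobenius coordinates `(a₁,…,a_d | a₁+1,…,a_d+1)`,
i.e. `λ'_i = λ_i + 1` for `1 ≤ i ≤ d(λ)`. -/
def InA (lam : Partn) : Prop := ∀ i < lam.frobDiag, lam.conj i = lam.f i + 1

/-- Membership in the set `B`: Frobenius coordinates `(b₁+1,…,b_d+1 | b₁,…,b_d)`,
i.e. `λ_i = λ'_i + 1` for `1 ≤ i ≤ d(λ)`. -/
def InB (lam : Partn) : Prop := ∀ i < lam.frobDiag, lam.f i = lam.conj i + 1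

/-- The cells of the Young diagram of `λ` (zero-indexed): `(i,j)` with `j < λ_{i+1}`. -/
noncomputable def cells (lam : Partn) : Finset (ℕ × ℕ) :=
  (Finset.range lam.len ×ˢ Finset.range (lam.f 0)).filter fun p => p.2 < lam.f p.1

/-- `dim λ`: the number of standard Young tableaux of shape `λ`, i.e. fillings of the
diagram with `1, …, |λ|`, each used exactly once, strictly increasing along rows and columns. -/
noncomputable def dim (lam : Partn) : ℕ :=
  Nat.card {T : ℕ × ℕ → ℕ //
    Set.BijOn T (lam.cells : Set (ℕ × ℕ)) (Set.Icc 1 lam.size) ∧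
    (∀ p, p ∉ lam.cells → T p = 0) ∧
    (∀ i j j', (i, j) ∈ lam.cells → (i, j') ∈ lam.cells → j < j' → T (i, j) < T (i, j')) ∧
    (∀ i i' j, (i, j) ∈ lam.cells → (i', j) ∈ lam.cells → i < i' → T (i, j) < T (i', j))}

end Partn

/-- The complete homogeneous coefficients `h_n(ρ)` of a specialization `ρ` given by its
power sums `p : ℕ → ℂ` (only `p k`, `k ≥ 1`, is used): the coefficients of
`H(ρ;z) = exp (∑_{k ≥ 1} p_k z^k / k) = ∑_{n ≥ 0} h_n z^n`, characterized by `h_0 = 1` and the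
Newton-type recursion `(n+1)·h_{n+1} = ∑_{k=0}^{n} p_{k+1} h_{n-k}`. -/
noncomputable def hcf (p : ℕ → ℂ) : ℕ → ℂ
  | 0 => 1
  | n + 1 => ((n : ℂ) + 1)⁻¹ * ∑ k ∈ Finset.range (n + 1), p (k + 1) * hcf p (n - k)
decreasing_by exact Nat.lt_succ_of_le (Nat.sub_le n k)

/-- `h_k(ρ)` for integer `k`, with `h_k = 0` for `k < 0`. -/
noncomputable def hz (p : ℕ → ℂ) (k : ℤ) : ℂ := if k < 0 then 0 else hcf p k.toNat

/-- The Schur function `s_λ(ρ) = det[h_{λ_i - i + j}]_{1 ≤ i,j ≤ ℓ(λ)}`. -/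
noncomputable def schur (p : ℕ → ℂ) (lam : Partn) : ℂ :=
  Matrix.det (Matrix.of fun i j : Fin lam.len =>
    hz p ((lam.f i.val : ℤ) - (i.val : ℤ) + (j.val : ℤ)))

/-- The (lifted) symplectic character
`sp_λ(ρ) = (1/2)·det[h_{λ_i - i + j} + h_{λ_i - i - j + 2}]_{1 ≤ i,j ≤ ℓ(λ)}`, equal to 1 for
the empty partition.  (Zero-indexed, the second entry index is `λ_i - i - j`.) -/
noncomputable def spChar (p : ℕ → ℂ) (lam : Partn) : ℂ :=
  if lam.len = 0 then 1 else
    (1 / 2 : ℂ) * Matrix.det (Matrix.of fun i j : Fin lam.len =>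
      hz p ((lam.f i.val : ℤ) - (i.val : ℤ) + (j.val : ℤ)) +
      hz p ((lam.f i.val : ℤ) - (i.val : ℤ) - (j.val : ℤ)))

/-- The (lifted) orthogonal character
`o_λ(ρ) = det[h_{λ_i - i + j} - h_{λ_i - i - j}]_{1 ≤ i,j ≤ ℓ(λ)}`, equal to 1 for
the empty partition. (Zero-indexed, the second entry index is `λ_i - i - j - 2`.) -/
noncomputable def oChar (p : ℕ → ℂ) (lam : Partn) : ℂ :=
  Matrix.det (Matrix.of fun i j : Fin lam.len =>
    hz p ((lam.f i.val : ℤ) - (i.val : ℤ) + (j.val : ℤ)) -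
    hz p ((lam.f i.val : ℤ) - (i.val : ℤ) - (j.val : ℤ) - 2))

/-- `H(ρ; z) = exp (∑_{k ≥ 1} p_k(ρ) z^k / k)`. -/
noncomputable def Hfun (p : ℕ → ℂ) (z : ℂ) : ℂ :=
  Complex.exp (∑' k : ℕ, p (k + 1) * z ^ (k + 1) / ((k : ℂ) + 1))

/-- `F(z) = H(ρ⁺;z) / (H(ρ⁻;z) H(ρ⁻;1/z))`. -/
noncomputable def Ffun (pp pm : ℕ → ℂ) (z : ℂ) : ℂ :=
  Hfun pp z / (Hfun pm z * Hfun pm z⁻¹)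

/-- `Z_sp = exp ∑_{k ≥ 1} ( p_k(ρ⁺)p_k(ρ⁻)/k + p_{2k}(ρ⁻)/(2k) − p_k(ρ⁻)²/(2k) )`. -/
noncomputable def Zsp (pp pm : ℕ → ℂ) : ℂ :=
  Complex.exp (∑' k : ℕ,
    (pp (k + 1) * pm (k + 1) / ((k : ℂ) + 1) + pm (2 * (k + 1)) / (2 * ((k : ℂ) + 1))
      - pm (k + 1) ^ 2 / (2 * ((k : ℂ) + 1))))

/-- `Z_o = exp ∑_{k ≥ 1} ( p_k(ρ⁺)p_k(ρ⁻)/k − p_{2k}(ρ⁻)/(2k) − p_k(ρ⁻)²/(2k) )`. -/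
noncomputable def Zo (pp pm : ℕ → ℂ) : ℂ :=
  Complex.exp (∑' k : ℕ,
    (pp (k + 1) * pm (k + 1) / ((k : ℂ) + 1) - pm (2 * (k + 1)) / (2 * ((k : ℂ) + 1))
      - pm (k + 1) ^ 2 / (2 * ((k : ℂ) + 1))))

/-- The symplectic correlation kernel `K_sp(a + 1/2, b + 1/2)` for `a, b ∈ ℤ`
(half-integer points are parametrized as `a + 1/2`, `a ∈ ℤ`), with contour radii `Rz, Rw`:
`K_sp = (2πi)⁻² ∮∮ (F(z)/F(w)) (1−w²)/((1−wz)(1−w/z)) z^{−(a+1/2)−3/2} w^{(b+1/2)−1/2} dz dw`. -/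
noncomputable def Ksp (pp pm : ℕ → ℂ) (Rz Rw : ℝ) (a b : ℤ) : ℂ :=
  ((2 * Real.pi * Complex.I)⁻¹) ^ 2 *
    ∮ z in C(0, Rz), ∮ w in C(0, Rw),
      Ffun pp pm z / Ffun pp pm w * ((1 - w ^ 2) / ((1 - w * z) * (1 - w / z))) *
        z ^ (-a - 2) * w ^ b

/-- The orthogonal correlation kernel `K_o(a + 1/2, b + 1/2)` for `a, b ∈ ℤ`. -/
noncomputable def Ko (pp pm : ℕ → ℂ) (Rz Rw : ℝ) (a b : ℤ) : ℂ :=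
  ((2 * Real.pi * Complex.I)⁻¹) ^ 2 *
    ∮ z in C(0, Rz), ∮ w in C(0, Rw),
      Ffun pp pm z / Ffun pp pm w * ((1 - z ^ 2) / ((1 - w * z) * (1 - w / z))) *
        z ^ (-a - 2) * w ^ b

/-- The Laurent coefficients `f_k = ∑_{j ≥ max(0,−k)} h_{k+j}(ρ⁺) h_j(ρ⁻)` of the symbol
`f(z) = H(ρ⁺;z)·H(ρ⁻;1/z)`. -/
noncomputable def fcoef (pp pm : ℕ → ℂ) (k : ℤ) : ℂ :=
  ∑' j : ℕ, hz pp (k + (j : ℤ)) * hcf pm j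

/-- The symbol `f(z) = H(ρ⁺;z)·H(ρ⁻;1/z)`. -/
noncomputable def symb (pp pm : ℕ → ℂ) (z : ℂ) : ℂ := Hfun pp z * Hfun pm z⁻¹

/-- The Laurent coefficients `f̌_k` of `f̌(z) = 1/f(−z)`, computed on the circle `|z| = R`:
`f̌_k = (2πi)⁻¹ ∮_{|z|=R} f̌(z) z^{−k−1} dz`. -/
noncomputable def fcheck (pp pm : ℕ → ℂ) (R : ℝ) (k : ℤ) : ℂ :=
  (2 * Real.pi * Complex.I)⁻¹ * ∮ z in C(0, R), (symb pp pm (-z))⁻¹ * z ^ (-k - 1)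

/-- The Plancherel specialization `pl_θ`: `p_1 = θ`, `p_k = 0` for `k ≥ 2`. -/
noncomputable def plSpec (θ : ℝ) : ℕ → ℂ := fun k => if k = 1 then (θ : ℂ) else 0

/-- The Airy function `Ai(x) = (1/π)·lim_{T→∞} ∫₀^T cos(t³/3 + xt) dt`. -/
noncomputable def Ai (x : ℝ) : ℝ :=
  (1 / Real.pi) * limUnder Filter.atTop
    (fun T : ℝ => ∫ t in (0 : ℝ)..T, Real.cos (t ^ 3 / 3 + x * t))

/-- The Airy `2→1` kernel `A₊(x,y) = ∫₀^∞ Ai(x+t)Ai(y+t) dt + ∫₀^∞ Ai(x−t)Ai(y+t) dt`. -/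
noncomputable def Aplus (x y : ℝ) : ℝ :=
  (∫ t in Set.Ioi (0 : ℝ), Ai (x + t) * Ai (y + t)) +
    ∫ t in Set.Ioi (0 : ℝ), Ai (x - t) * Ai (y + t)

/-- The dual kernel `A₋(x,y) = ∫₀^∞ Ai(x+t)Ai(y+t) dt − ∫₀^∞ Ai(x−t)Ai(y+t) dt`. -/
noncomputable def Aminus (x y : ℝ) : ℝ :=
  (∫ t in Set.Ioi (0 : ℝ), Ai (x + t) * Ai (y + t)) -
    ∫ t in Set.Ioi (0 : ℝ), Ai (x - t) * Ai (y + t)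

/-- The Airy kernel `K_Ai(x,y) = ∫₀^∞ Ai(x+t)Ai(y+t) dt`. -/
noncomputable def KAiry (x y : ℝ) : ℝ :=
  ∫ t in Set.Ioi (0 : ℝ), Ai (x + t) * Ai (y + t)

/-- The Fredholm determinant `det(1−K)_{L²(s,∞)}
= ∑_{n≥0} ((−1)^n/n!) ∫_{(s,∞)^n} det[K(xᵢ,xⱼ)] dx`. -/
noncomputable def fredholmDet (K : ℝ → ℝ → ℝ) (s : ℝ) : ℝ :=
  ∑' n : ℕ, ((-1 : ℝ) ^ n / (n.factorial : ℝ)) *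
    ∫ x in (Set.univ.pi fun _ : Fin n => Set.Ioi s),
      Matrix.det (Matrix.of fun i j : Fin n => K (x i) (x j))

noncomputable def Mmat (n : ℕ) (a : Fin n → ℤ) : Matrix (Fin n) (Fin n) ℂ :=
  Matrix.of fun i j => (if a i = -((j : ℤ) + 1) then (1:ℂ) else 0) -
    (if a i = (j : ℤ) + 1 then 1 else 0)

theorem detM : ∀ (n : ℕ) (a : Fin n → ℤ), StrictAnti a →
    (∀ i, 1 ≤ |a i| ∧ |a i| ≤ n) → Function.Injective (fun i => |a i|) →
    (Mmat n a).det = (-1 : ℂ) ^ (∑ i, if 0 < a i then (a i).toNat else 0) := by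
  intro n
  induction n with
  | zero => intro a _ _ _; simp [Matrix.det_fin_zero]
  | succ n IH =>
    intro a hanti hbd hinj
    set g : Fin (n+1) → Fin (n+1) := fun i => ⟨(|a i|).toNat - 1, by
      have h1 := (hbd i).1; have h2 := (hbd i).2; omega⟩ with hg
    have hginj : Function.Injective g := by
      intro i k h
      apply hinj
      have h1 := (hbd i).1; have h2 := (hbd k).1
      have : (|a i|).toNat - 1 = (|a k|).toNat - 1 := congrArg Fin.val h
      simp only; omega
    obtain ⟨i0, hi0⟩ := (Finite.injective_iff_surjective.1 hginj) (Fin.last n)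
    have hi0v : |a i0| = n + 1 := by
      have : ((|a i0|).toNat - 1 : ℕ) = n := congrArg Fin.val hi0
      have h1 := (hbd i0).1
      omega
    have hother : ∀ i : Fin (n+1), i ≠ i0 → |a i| ≤ n := by
      intro i hne
      have := (hbd i).2
      have hne' : |a i| ≠ |a i0| := fun h => hne (hinj h)
      rw [hi0v] at hne'
      omega
    have hjl : ((Fin.last n : Fin (n+1)) : ℤ) = n := by simp
    have hexp := Matrix.det_succ_column (Mmat (n+1) a) (Fin.last n)
    have hzero : ∀ i : Fin (n+1), i ≠ i0 → Mmat (n+1) a i (Fin.last n) = 0 := by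
      intro i hne
      have h := hother i hne
      have h' := abs_le.mp h
      simp only [Mmat, Matrix.of_apply, hjl]
      rw [if_neg (by omega), if_neg (by omega)]
      ring
    have hminor : (Mmat (n+1) a).submatrix i0.succAbove (Fin.last n).succAbove
        = Mmat n (a ∘ i0.succAbove) := by
      ext k j
      simp [Mmat, Matrix.submatrix, Fin.succAbove_last]
    have hIH : (Mmat n (a ∘ i0.succAbove)).det
        = (-1 : ℂ) ^ (∑ k : Fin n, if 0 < a (i0.succAbove k) then (a (i0.succAbove k)).toNat else 0) := by
      apply IH
      · exact hanti.comp_strictMono (Fin.strictMono_succAbove i0)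
      · intro k
        refine ⟨(hbd _).1, ?_⟩
        exact_mod_cast hother _ (Fin.succAbove_ne i0 k)
      · exact fun k l h => (Fin.strictMono_succAbove i0).injective
          (hinj (by simpa using h))
    have hsum : (∑ i : Fin (n+1), if 0 < a i then (a i).toNat else 0)
        = (if 0 < a i0 then (a i0).toNat else 0)
          + ∑ k : Fin n, if 0 < a (i0.succAbove k) then (a (i0.succAbove k)).toNat else 0 := by
      rw [Fin.sum_univ_succAbove (fun i => if 0 < a i then (a i).toNat else 0) i0]
    rw [hexp, Fintype.sum_eq_single i0 (by intro i hne; rw [hzero i hne]; ring), hminor, hIH, hsum]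
    rcases abs_cases (a i0) with ⟨hc, hpos⟩ | ⟨hc, hneg⟩
    · -- a i0 = n+1 > 0, then i0 = 0
      have hval : a i0 = n + 1 := by omega
      have hi00 : i0 = 0 := by
        by_contra hne
        have h0 : (0 : Fin (n+1)) < i0 := Fin.pos_of_ne_zero (Ne.symm (fun h => hne h.symm))
        have hlt : a i0 < a 0 := hanti h0
        have habs := abs_le.mp (hbd 0).2
        push_cast at habs
        omega
      have hentry : Mmat (n+1) a i0 (Fin.last n) = -1 := by
        simp only [Mmat, Matrix.of_apply, hjl]
        rw [if_neg (by omega), if_pos (by omega)]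
        ring
      subst hi00
      rw [hentry, if_pos (by omega)]
      have htn : (a 0 : ℤ).toNat = n + 1 := by omega
      rw [htn]
      simp only [Fin.val_zero, Fin.val_last, zero_add]
      rw [pow_add, pow_add, pow_one]
    · -- a i0 = -(n+1) < 0, then i0 = last
      have hval : a i0 = -((n:ℤ) + 1) := by omega
      have hi0l : i0 = Fin.last n := by
        by_contra hne
        have h0 : i0 < Fin.last n := lt_of_le_of_ne (Fin.le_last i0) hne
        have hlt : a (Fin.last n) < a i0 := hanti h0
        have habs := abs_le.mp (hbd (Fin.last n)).2
        push_cast at habs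
        omega
      have hentry : Mmat (n+1) a i0 (Fin.last n) = 1 := by
        simp only [Mmat, Matrix.of_apply, hjl]
        rw [if_pos (by omega), if_neg (by omega)]
        ring
      subst hi0l
      rw [hentry, if_neg (by omega)]
      simp only [Fin.val_last, zero_add]
      rw [show (n:ℕ) + n = 2 * n by ring, pow_mul]
      norm_num

section Basic
variable (lam : Partn)

theorem f_len_eq_zero : lam.f lam.len = 0 := by
  have hne : {N | lam.f N = 0}.Nonempty := by
    obtain ⟨N, hN⟩ := lam.finsupp
    exact ⟨N, hN N le_rfl⟩
  exact Nat.sInf_mem hne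

theorem f_pos_of_lt_len {i : ℕ} (h : i < lam.len) : 1 ≤ lam.f i := by
  have := Nat.notMem_of_lt_sInf (h : i < sInf {N | lam.f N = 0})
  simpa [Nat.one_le_iff_ne_zero] using this

theorem f_eq_zero_of_le {i : ℕ} (h : lam.len ≤ i) : lam.f i = 0 :=
  Nat.eq_zero_of_le_zero ((f_len_eq_zero lam ▸ lam.antitone h))

/-- a downward closed filter of a range is a range -/
theorem filter_eq_range {n : ℕ} (p : ℕ → Prop) [DecidablePred p]
    (hdown : ∀ k i, k ≤ i → i < n → p i → p k) :
    (Finset.range n).filter p = Finset.range (((Finset.range n).filter p).card) := by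
  ext i
  simp only [mem_filter, mem_range]
  constructor
  · rintro ⟨hin, hpi⟩
    have hsub : Finset.range (i+1) ⊆ (Finset.range n).filter p := by
      intro k hk
      simp only [mem_range] at hk
      exact mem_filter.2 ⟨mem_range.2 (lt_of_le_of_lt (Nat.lt_succ_iff.1 hk) hin),
        hdown k i (Nat.lt_succ_iff.1 hk) hin hpi⟩
    have := Finset.card_le_card hsub
    simpa using this
  · intro hi
    by_contra hcon
    push_neg at hcon
    have hsub : (Finset.range n).filter p ⊆ Finset.range i := by
      intro k hk
      simp only [mem_filter, mem_range] at hk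
      simp only [mem_range]
      by_contra hik
      push_neg at hik
      exact hcon (lt_of_le_of_lt hik hk.1) (hdown i k hik hk.1 hk.2)
    have := Finset.card_le_card hsub
    simp only [Finset.card_range] at this
    omega

theorem lt_conj_iff {i j : ℕ} : i < lam.conj j ↔ i < lam.len ∧ j < lam.f i := by
  have hd : ∀ k i, k ≤ i → i < lam.len → j < lam.f i → j < lam.f k :=
    fun k i hki _ hpi => lt_of_lt_of_le hpi (lam.antitone hki)
  have h := filter_eq_range (n := lam.len) (fun i => j < lam.f i) hd
  constructor
  · intro hi
    have : i ∈ (Finset.range lam.len).filter fun k => j < lam.f k := by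
      rw [h]; exact mem_range.2 hi
    simpa [mem_filter, mem_range] using this
  · intro ⟨h1, h2⟩
    have : i ∈ (Finset.range lam.len).filter fun k => j < lam.f k :=
      mem_filter.2 ⟨mem_range.2 h1, h2⟩
    rw [h] at this
    simpa [Partn.conj] using this

theorem lt_frobDiag_iff {i : ℕ} : i < lam.frobDiag ↔ i < lam.len ∧ i < lam.f i := by
  have hd : ∀ k i, k ≤ i → i < lam.len → i < lam.f i → k < lam.f k :=
    fun k i hki _ hpi => lt_of_le_of_lt hki (lt_of_lt_of_le hpi (lam.antitone hki))
  have h := filter_eq_range (n := lam.len) (fun i => i < lam.f i) hd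
  constructor
  · intro hi
    have : i ∈ (Finset.range lam.len).filter fun k => k < lam.f k := by
      rw [h]; exact mem_range.2 hi
    simpa [mem_filter, mem_range] using this
  · intro ⟨h1, h2⟩
    have : i ∈ (Finset.range lam.len).filter fun k => k < lam.f k :=
      mem_filter.2 ⟨mem_range.2 h1, h2⟩
    rw [h] at this
    simpa [Partn.frobDiag] using this

theorem frobDiag_le_len : lam.frobDiag ≤ lam.len :=
  le_trans (Finset.card_le_card (filter_subset _ _)) (by simp)

theorem conj_le_len (j : ℕ) : lam.conj j ≤ lam.len :=
  le_trans (Finset.card_le_card (filter_subset _ _)) (by simp)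

theorem conj_antitone {j j' : ℕ} (h : j ≤ j') : lam.conj j' ≤ lam.conj j :=
  Finset.card_le_card (Finset.monotone_filter_right _ (fun i _ hi => lt_of_le_of_lt h hi))

theorem conj_ge_of_lt_frobDiag {j : ℕ} (h : j < lam.frobDiag) : j + 1 ≤ lam.conj j := by
  rw [Nat.succ_le_iff, lt_conj_iff]
  exact (lt_frobDiag_iff lam).1 h

theorem conj_le_of_ge_frobDiag {j : ℕ} (h : lam.frobDiag ≤ j) : lam.conj j ≤ j := by
  by_contra hcon
  push_neg at hcon
  have := (lt_conj_iff lam).1 hcon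
  have := (lt_frobDiag_iff lam).2 this
  omega

/-- generic disjointness of the B-candidates and the negative absolute values -/
theorem disjoint_BN {j i : ℕ} (hj : j < lam.frobDiag) (hdi : lam.frobDiag ≤ i)
    (hin : i < lam.len) : (lam.conj j : ℤ) - j ≠ (i : ℤ) + 1 - lam.f i := by
  intro heq
  rcases Nat.lt_or_ge j (lam.f i) with hfi | hfi
  · -- j < f i: i < conj j
    have hic : i < lam.conj j := (lt_conj_iff lam).2 ⟨hin, hfi⟩
    omega
  · -- f i ≤ j: conj j ≤ i
    have hci : lam.conj j ≤ i := by
      have hsub : (Finset.range lam.len).filter (fun k => j < lam.f k) ⊆ Finset.range i := by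
        intro k hk
        simp only [mem_filter, mem_range] at hk ⊢
        by_contra hik
        push_neg at hik
        have := lam.antitone hik
        omega
      exact le_trans (Finset.card_le_card hsub) (by simp)
    have hf1 : 1 ≤ lam.f i := f_pos_of_lt_len lam hin
    omega

end Basic

section SizeFormula
variable (lam : Partn)

theorem size_formula :
    lam.size = (∑ i ∈ Finset.range lam.frobDiag, (lam.f i - i))
      + ∑ j ∈ Finset.range lam.frobDiag, (lam.conj j - (j + 1)) := by
  classical
  set n := lam.len with hn
  set d := lam.frobDiag with hd
  have hdn : d ≤ n := frobDiag_le_len lam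
  have hsplit : ∀ i, lam.f i = (lam.f i - i) + min (lam.f i) i := by intro i; omega
  have h1 : lam.size = (∑ i ∈ Finset.range n, (lam.f i - i))
      + ∑ i ∈ Finset.range n, min (lam.f i) i := by
    rw [Partn.size, ← Finset.sum_add_distrib]
    exact Finset.sum_congr rfl fun i _ => hsplit i
  -- first sum truncates to d
  have h2 : (∑ i ∈ Finset.range n, (lam.f i - i)) = ∑ i ∈ Finset.range d, (lam.f i - i) := by
    rw [← Finset.sum_range_add_sum_Ico _ hdn]
    have : ∑ i ∈ Finset.Ico d n, (lam.f i - i) = 0 := by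
      apply Finset.sum_eq_zero
      intro i hi
      simp only [Finset.mem_Ico] at hi
      have : lam.f i ≤ i := by
        by_contra hcon
        push_neg at hcon
        have := (lt_frobDiag_iff lam).2 ⟨hi.2, hcon⟩
        omega
      omega
    omega
  -- second sum: double counting
  have h3 : (∑ i ∈ Finset.range n, min (lam.f i) i)
      = ∑ j ∈ Finset.range n, (lam.conj j - (j + 1)) := by
    have hrow : ∀ i ∈ Finset.range n, min (lam.f i) i
        = ∑ j ∈ Finset.range n, (if j < lam.f i ∧ j < i then 1 else 0) := by
      intro i hi
      simp only [Finset.mem_range] at hi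
      rw [← Finset.card_filter]
      have heq : (Finset.range n).filter (fun j => j < lam.f i ∧ j < i)
          = Finset.range (min (lam.f i) i) := by
        ext j
        simp only [Finset.mem_filter, Finset.mem_range]
        omega
      rw [heq, Finset.card_range]
    have hcol : ∀ j, (∑ i ∈ Finset.range n, (if j < lam.f i ∧ j < i then 1 else 0))
        = lam.conj j - (j + 1) := by
      intro j
      rw [← Finset.card_filter]
      have heq : (Finset.range n).filter (fun i => j < lam.f i ∧ j < i)
          = Finset.Ico (j+1) (lam.conj j) := by
        ext i
        simp only [Finset.mem_filter, Finset.mem_range, Finset.mem_Ico]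
        constructor
        · rintro ⟨h1, h2, h3⟩
          exact ⟨by omega, (lt_conj_iff lam).2 ⟨h1, h2⟩⟩
        · rintro ⟨h1, h2⟩
          have h3 := (lt_conj_iff lam).1 h2
          exact ⟨h3.1, h3.2, by omega⟩
      rw [heq, Nat.card_Ico]
    rw [Finset.sum_congr rfl hrow, Finset.sum_comm]
    exact Finset.sum_congr rfl fun j _ => hcol j
  rw [h1, h2, h3]
  congr 1
  -- truncate second sum to d
  rw [← Finset.sum_range_add_sum_Ico _ hdn]
  have : ∑ j ∈ Finset.Ico d n, (lam.conj j - (j + 1)) = 0 := by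
    apply Finset.sum_eq_zero
    intro j hj
    simp only [Finset.mem_Ico] at hj
    have := conj_le_of_ge_frobDiag lam hj.1
    omega
  omega

end SizeFormula

section GoodInB
variable (lam : Partn)

/-- abbreviation for the shifted row data -/
noncomputable def arow (lam : Partn) (i : ℕ) : ℤ := (lam.f i : ℤ) - i - 1

theorem arow_strictAnti {i k : ℕ} (h : i < k) : arow lam k < arow lam i := by
  have := lam.antitone (le_of_lt h)
  unfold arow
  omega

theorem arow_neg_of_ge {i : ℕ} (hd : lam.frobDiag ≤ i) (hn : i < lam.len) :
    arow lam i ≤ -1 := by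
  have hfi : lam.f i ≤ i := by
    by_contra hcon
    push_neg at hcon
    have := (lt_frobDiag_iff lam).2 ⟨hn, hcon⟩
    omega
  unfold arow; omega

theorem arow_abs_neg {i : ℕ} (hd : lam.frobDiag ≤ i) (hn : i < lam.len) :
    1 ≤ |arow lam i| ∧ |arow lam i| ≤ lam.len ∧ |arow lam i| = (i : ℤ) + 1 - lam.f i := by
  have h1 := arow_neg_of_ge lam hd hn
  have h2 := f_pos_of_lt_len lam hn
  unfold arow at *
  have h3 : |(lam.f i : ℤ) - i - 1| = (i : ℤ) + 1 - lam.f i := by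
    rw [abs_of_nonpos (by omega)]; ring
  refine ⟨by omega, by omega, h3⟩

theorem arow_pos_of_lt {i : ℕ} (hd : i < lam.frobDiag) (hne : arow lam i ≠ 0) :
    1 ≤ arow lam i := by
  have := (lt_frobDiag_iff lam).1 hd
  unfold arow at *
  omega

/-- InB gives the positive rows' values -/
theorem arow_of_inB (hB : lam.InB) {i : ℕ} (hd : i < lam.frobDiag) :
    arow lam i = (lam.conj i : ℤ) - i := by
  have := hB i hd
  unfold arow
  omega

theorem inB_good (hB : lam.InB) :
    (∀ i : Fin lam.len, 1 ≤ |arow lam i| ∧ |arow lam i| ≤ lam.len) ∧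
    Function.Injective (fun i : Fin lam.len => |arow lam i|) := by
  have habs : ∀ i : Fin lam.len, i < lam.frobDiag → |arow lam i| = (lam.conj i : ℤ) - i := by
    intro i hi
    rw [arow_of_inB lam hB hi]
    have := conj_ge_of_lt_frobDiag lam hi
    rw [abs_of_nonneg (by omega)]
  constructor
  · intro i
    rcases Nat.lt_or_ge i.val lam.frobDiag with hi | hi
    · rw [habs i hi]
      have h1 := conj_ge_of_lt_frobDiag lam hi
      have h2 := conj_le_len lam i
      omega
    · have := arow_abs_neg lam hi i.isLt
      exact ⟨this.1, this.2.1⟩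
  · intro i k h
    simp only at h
    rcases Nat.lt_or_ge i.val lam.frobDiag with hi | hi <;>
      rcases Nat.lt_or_ge k.val lam.frobDiag with hk | hk
    · -- both positive
      rw [habs i hi, habs k hk] at h
      apply Fin.ext
      by_contra hne
      rcases Nat.lt_or_ge i.val k.val with hlt | hge
      · have c1 := conj_antitone lam (le_of_lt hlt)
        omega
      · have hgt : k.val < i.val := by omega
        have c1 := conj_antitone lam (le_of_lt hgt)
        omega
    · rw [habs i hi, (arow_abs_neg lam hk k.isLt).2.2] at h
      exact absurd h (disjoint_BN lam hi hk k.isLt)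
    · rw [habs k hk, (arow_abs_neg lam hi i.isLt).2.2] at h
      exact absurd h.symm (disjoint_BN lam hk hi i.isLt)
    · -- both negative: |arow| strictly increasing
      rw [(arow_abs_neg lam hi i.isLt).2.2, (arow_abs_neg lam hk k.isLt).2.2] at h
      apply Fin.ext
      by_contra hne
      rcases Nat.lt_or_ge i.val k.val with hlt | hge
      · have := lam.antitone (le_of_lt hlt); omega
      · have hgt : k.val < i.val := by omega
        have := lam.antitone (le_of_lt hgt); omega
end GoodInB

section GoodToInB
variable (lam : Partn)

theorem good_inB
    (hbd : ∀ i : Fin lam.len, 1 ≤ |arow lam i| ∧ |arow lam i| ≤ lam.len)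
    (hinj : Function.Injective (fun i : Fin lam.len => |arow lam i|)) : lam.InB := by
  classical
  set n := lam.len with hn
  set d := lam.frobDiag with hd
  have hdn : d ≤ n := frobDiag_le_len lam
  -- positive rows
  have hpos : ∀ i : ℕ, i < d → 1 ≤ arow lam i := by
    intro i hi
    have hil : i < n := lt_of_lt_of_le hi hdn
    have h1 := (hbd ⟨i, hil⟩).1
    apply arow_pos_of_lt lam hi
    intro hc
    rw [show arow lam (⟨i, hil⟩ : Fin n).val = arow lam i from rfl, hc] at h1
    simp at h1
  have hposabs : ∀ i : ℕ, (hi : i < d) → |arow lam i| = arow lam i := by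
    intro i hi
    exact abs_of_nonneg (by linarith [hpos i hi])
  -- three finsets
  set A : Finset ℤ := (Finset.range d).image (fun i => arow lam i) with hA
  set Bs : Finset ℤ := (Finset.range d).image (fun j => (lam.conj j : ℤ) - j) with hBs
  set N : Finset ℤ := (Finset.Ico d n).image (fun i : ℕ => (i : ℤ) + 1 - lam.f i) with hN
  have hcardA : A.card = d := by
    rw [hA, Finset.card_image_of_injOn, Finset.card_range]
    intro i hi k hk h
    simp only [Finset.coe_range, Set.mem_Iio] at hi hk
    simp only at h
    by_contra hne
    rcases Nat.lt_or_ge i k with hlt | hge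
    · have := arow_strictAnti lam hlt; omega
    · have hgt : k < i := by omega
      have := arow_strictAnti lam hgt; omega
  have hcardB : Bs.card = d := by
    rw [hBs, Finset.card_image_of_injOn, Finset.card_range]
    intro i hi k hk h
    simp only [Finset.coe_range, Set.mem_Iio] at hi hk
    by_contra hne
    rcases Nat.lt_or_ge i k with hlt | hge
    · have := conj_antitone lam (le_of_lt hlt); simp only at h; omega
    · have hgt : k < i := by omega
      have := conj_antitone lam (le_of_lt hgt); simp only at h; omega
  have hcardN : N.card = n - d := by
    rw [hN, Finset.card_image_of_injOn, Nat.card_Ico]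
    intro i hi k hk h
    simp only [Finset.coe_Ico, Set.mem_Ico] at hi hk
    simp only at h
    by_contra hne
    rcases Nat.lt_or_ge i k with hlt | hge
    · have := lam.antitone (le_of_lt hlt); omega
    · have hgt : k < i := by omega
      have := lam.antitone (le_of_lt hgt); omega
  -- inclusions in Icc 1 n
  have hsubA : A ⊆ Finset.Icc (1 : ℤ) n := by
    intro x hx
    rw [hA, Finset.mem_image] at hx
    obtain ⟨i, hi, rfl⟩ := hx
    simp only [Finset.mem_range] at hi
    have hil : i < n := lt_of_lt_of_le hi hdn
    have h2 := (hbd ⟨i, hil⟩).2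
    rw [show ((⟨i, hil⟩ : Fin n) : ℕ) = i from rfl, hposabs i hi] at h2
    exact Finset.mem_Icc.2 ⟨hpos i hi, h2⟩
  have hsubB : Bs ⊆ Finset.Icc (1 : ℤ) n := by
    intro x hx
    rw [hBs, Finset.mem_image] at hx
    obtain ⟨j, hj, rfl⟩ := hx
    simp only [Finset.mem_range] at hj
    have h1 := conj_ge_of_lt_frobDiag lam hj
    have h2 := conj_le_len lam j
    exact Finset.mem_Icc.2 ⟨by omega, by omega⟩
  have hsubN : N ⊆ Finset.Icc (1 : ℤ) n := by
    intro x hx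
    rw [hN, Finset.mem_image] at hx
    obtain ⟨i, hi, rfl⟩ := hx
    simp only [Finset.mem_Ico] at hi
    have h := arow_abs_neg lam hi.1 hi.2
    rw [h.2.2] at *
    exact Finset.mem_Icc.2 ⟨by omega, by omega⟩
  -- disjointness
  have hdisjAN : Disjoint A N := by
    rw [Finset.disjoint_left]
    intro x hxA hxN
    rw [hA, Finset.mem_image] at hxA
    rw [hN, Finset.mem_image] at hxN
    obtain ⟨i, hi, hix⟩ := hxA
    obtain ⟨k, hk, hkx⟩ := hxN
    simp only [Finset.mem_range] at hi
    simp only [Finset.mem_Ico] at hk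
    have hil : i < n := lt_of_lt_of_le hi hdn
    have habs : |arow lam i| = |arow lam k| := by
      rw [hposabs i hi, (arow_abs_neg lam hk.1 hk.2).2.2, hix, hkx]
    have := hinj (a₁ := ⟨i, hil⟩) (a₂ := ⟨k, hk.2⟩) habs
    have : i = k := congrArg Fin.val this
    omega
  have hdisjBN : Disjoint Bs N := by
    rw [Finset.disjoint_left]
    intro x hxB hxN
    rw [hBs, Finset.mem_image] at hxB
    rw [hN, Finset.mem_image] at hxN
    obtain ⟨j, hj, hjx⟩ := hxB
    obtain ⟨k, hk, hkx⟩ := hxN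
    simp only [Finset.mem_range] at hj
    simp only [Finset.mem_Ico] at hk
    exact disjoint_BN lam hj hk.1 hk.2 (by rw [hjx, hkx])
  -- card of Icc
  have hcardI : (Finset.Icc (1 : ℤ) n).card = n := by
    rw [Int.card_Icc]
    omega
  -- unions equal Icc
  have hAN : A ∪ N = Finset.Icc (1 : ℤ) n := by
    apply Finset.eq_of_subset_of_card_le (Finset.union_subset hsubA hsubN)
    rw [Finset.card_union_of_disjoint hdisjAN, hcardA, hcardN, hcardI]
    omega
  have hBN : Bs ∪ N = Finset.Icc (1 : ℤ) n := by
    apply Finset.eq_of_subset_of_card_le (Finset.union_subset hsubB hsubN)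
    rw [Finset.card_union_of_disjoint hdisjBN, hcardB, hcardN, hcardI]
    omega
  have hAB : A = Bs := by
    rw [← Finset.union_sdiff_cancel_right hdisjAN, ← Finset.union_sdiff_cancel_right hdisjBN,
      hAN, hBN]
  -- pointwise equality via sorted enumeration
  set s : Finset ℤ := A.image (fun x => -x) with hs
  have hcards : s.card = d := by
    rw [hs, Finset.card_image_of_injective _ neg_injective, hcardA]
  set u : Fin d → ℤ := fun k => -(arow lam k) with hu
  set v : Fin d → ℤ := fun k => (k : ℤ) - lam.conj k with hv
  have humem : ∀ k : Fin d, u k ∈ s := by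
    intro k
    rw [hs, Finset.mem_image]
    exact ⟨arow lam k, by rw [hA, Finset.mem_image]; exact ⟨k, Finset.mem_range.2 k.isLt, rfl⟩, rfl⟩
  have hvmem : ∀ k : Fin d, v k ∈ s := by
    intro k
    rw [hs, hAB, Finset.mem_image]
    refine ⟨(lam.conj k : ℤ) - k, ?_, by ring⟩
    rw [hBs, Finset.mem_image]
    exact ⟨k, Finset.mem_range.2 k.isLt, rfl⟩
  have humono : StrictMono u := by
    intro k l hkl
    have := arow_strictAnti lam (show (k : ℕ) < l from hkl)
    simp only [hu]
    omega
  have hvmono : StrictMono v := by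
    intro k l hkl
    have := conj_antitone lam (le_of_lt (show (k : ℕ) < l from hkl))
    simp only [hv]
    have : (k : ℕ) < (l : ℕ) := hkl
    omega
  have huv : u = v := by
    rw [Finset.orderEmbOfFin_unique hcards humem humono,
      Finset.orderEmbOfFin_unique hcards hvmem hvmono]
  -- conclude
  intro i hi
  have := congrFun huv ⟨i, hi⟩
  simp only [hu, hv] at this
  unfold arow at this
  omega

end GoodToInB


section Glue

theorem hcf_zero (m : ℕ) : hcf (fun _ => 0) m = if m = 0 then 1 else 0 := by
  cases m with
  | zero => simp [hcf]
  | succ n => simp [hcf]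

theorem hz_zero (k : ℤ) : hz (fun _ => 0) k = if k = 0 then 1 else 0 := by
  unfold hz
  rcases lt_or_ge k 0 with h | h
  · rw [if_pos h, if_neg (by omega)]
  · rw [if_neg (by omega), hcf_zero]
    by_cases hk : k = 0
    · rw [if_pos hk, if_pos (by omega)]
    · rw [if_neg hk, if_neg (by omega)]

theorem oChar_eq_Mmat (lam : Partn) :
    oChar (fun _ => 0) lam = (Mmat lam.len (fun i => arow lam i.val)).det := by
  unfold oChar
  congr 1
  ext i j
  rw [Matrix.of_apply, hz_zero, hz_zero]
  simp only [Mmat, Matrix.of_apply]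
  have e1 : ((lam.f i.val : ℤ) - i.val + j.val = 0) ↔ (arow lam i.val = -((j.val : ℤ) + 1)) := by
    unfold arow; omega
  have e2 : ((lam.f i.val : ℤ) - i.val - j.val - 2 = 0) ↔ (arow lam i.val = (j.val : ℤ) + 1) := by
    unfold arow; omega
  rw [if_congr e1 rfl rfl, if_congr e2 rfl rfl]

theorem Mmat_det_zero {n : ℕ} (a : Fin n → ℤ)
    (hbad : ¬ ((∀ i, 1 ≤ |a i| ∧ |a i| ≤ n) ∧ Function.Injective fun i => |a i|)) :
    (Mmat n a).det = 0 := by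
  classical
  by_cases hex : ∃ i, ¬ (1 ≤ |a i| ∧ |a i| ≤ n)
  · obtain ⟨i, hi⟩ := hex
    push_neg at hi
    apply Matrix.det_eq_zero_of_row_eq_zero i
    intro j
    have hj : (j : ℕ) < n := j.isLt
    have c1 : a i ≠ -((j : ℤ) + 1) := by
      intro h
      have habs : |a i| = (j : ℤ) + 1 := by
        rw [h, abs_neg, abs_of_nonneg (by positivity)]
      omega
    have c2 : a i ≠ (j : ℤ) + 1 := by
      intro h
      have habs : |a i| = (j : ℤ) + 1 := by
        rw [h, abs_of_nonneg (by positivity)]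
      omega
    simp only [Mmat, Matrix.of_apply]
    rw [if_neg c1, if_neg c2]
    ring
  · push_neg at hex
    have hbd : ∀ i, 1 ≤ |a i| ∧ |a i| ≤ n := hex
    have hninj : ¬ Function.Injective fun i => |a i| := by
      intro h
      exact hbad ⟨hbd, h⟩
    set g : Fin n → Fin n := fun i => ⟨(|a i|).toNat - 1, by
      have h1 := (hbd i).1; have h2 := (hbd i).2; omega⟩ with hg
    have hgninj : ¬ Function.Injective g := by
      intro h
      apply hninj
      intro i k hik
      simp only at hik
      have h1 := (hbd i).1
      have h2 := (hbd k).1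
      apply h
      apply Fin.ext
      simp only [hg]
      omega
    have hgs : ¬ ∀ c, ∃ i, g i = c := fun h =>
      hgninj (Finite.injective_iff_surjective.2 h)
    push_neg at hgs
    obtain ⟨c, hc⟩ := hgs
    apply Matrix.det_eq_zero_of_column_eq_zero c
    intro i
    have hci : g i ≠ c := hc i
    have hcval : (|a i|).toNat - 1 ≠ (c : ℕ) := fun h => hci (Fin.ext h)
    have h1 := (hbd i).1
    have c1 : a i ≠ -((c : ℤ) + 1) := by
      intro h
      have habs : |a i| = (c : ℤ) + 1 := by
        rw [h, abs_neg, abs_of_nonneg (by positivity)]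
      omega
    have c2 : a i ≠ (c : ℤ) + 1 := by
      intro h
      have habs : |a i| = (c : ℤ) + 1 := by
        rw [h, abs_of_nonneg (by positivity)]
      omega
    simp only [Mmat, Matrix.of_apply]
    rw [if_neg c1, if_neg c2]
    ring

end Glue

/-- At the empty specialization (`p_k = 0` for all `k`), `o_λ(0) = (−1)^{|λ|/2}` for
`λ ∈ B` (and `|λ|` is then even), and `o_λ(0) = 0` otherwise. -/
theorem o_at_empty_specialization (lam : Partn) :
    (lam.InB → Even lam.size ∧ oChar (fun _ => 0) lam = (-1 : ℂ) ^ (lam.size / 2)) ∧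
    (¬ lam.InB → oChar (fun _ => 0) lam = 0) := by
  classical
  have hmat := oChar_eq_Mmat lam
  constructor
  · intro hB
    obtain ⟨hbd, hinj⟩ := inB_good lam hB
    have hanti : StrictAnti (fun i : Fin lam.len => arow lam i.val) :=
      fun i k h => arow_strictAnti lam h
    have hdet := detM lam.len (fun i => arow lam i.val) hanti hbd hinj
    set d := lam.frobDiag with hd
    have hdn : d ≤ lam.len := frobDiag_le_len lam
    have hexp : (∑ i : Fin lam.len, if 0 < arow lam i.val then (arow lam i.val).toNat else 0)
        = ∑ i ∈ Finset.range d, (lam.conj i - i) := by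
      rw [Fin.sum_univ_eq_sum_range (fun i => if 0 < arow lam i then (arow lam i).toNat else 0)
        lam.len]
      rw [← Finset.sum_range_add_sum_Ico _ hdn]
      have hzero : (∑ i ∈ Finset.Ico d lam.len,
          if 0 < arow lam i then (arow lam i).toNat else 0) = 0 := by
        apply Finset.sum_eq_zero
        intro i hi
        simp only [Finset.mem_Ico] at hi
        have := arow_neg_of_ge lam hi.1 hi.2
        rw [if_neg (by omega)]
      rw [hzero, add_zero]
      apply Finset.sum_congr rfl
      intro i hi
      simp only [Finset.mem_range] at hi
      have h1 := arow_of_inB lam hB hi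
      have h2 := conj_ge_of_lt_frobDiag lam hi
      rw [if_pos (by omega), h1]
      omega
    have hsize : lam.size = 2 * ∑ i ∈ Finset.range d, (lam.conj i - i) := by
      rw [size_formula lam, Finset.mul_sum, ← Finset.sum_add_distrib]
      apply Finset.sum_congr rfl
      intro i hi
      simp only [Finset.mem_range] at hi
      have h1 := hB i hi
      have h2 := conj_ge_of_lt_frobDiag lam hi
      omega
    refine ⟨⟨∑ i ∈ Finset.range d, (lam.conj i - i), by omega⟩, ?_⟩
    rw [hmat, hdet, hexp]
    congr 1
    omega
  · intro hnB
    rw [hmat]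
    apply Mmat_det_zero
    rintro ⟨hbd, hinj⟩
    exact hnB (good_inB lam hbd hinj)
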